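/- For α>0 and λ>0, the Laplace transform of t ↦ E_{α,1}(−λ t^α) equals z^{α−1}/(λ + z^α) for all real z > λ^{1/α}. -/

import Mathlib

open MeasureTheory Real Set

/-- The real Mittag-Leffler function `E_{α,β}(x) = Σ_{k=0}^∞ x^k / Γ(αk+β)`. -/
noncomputable def mittagLeffler (α β x : ℝ) : ℝ :=
  ∑' k : ℕ, x ^ k / Real.Gamma (α * k + β)

private lemma ml_aux_pos (α : ℝ) (hα : 0 < α) (k : ℕ) : (0:ℝ) < α * k + 1 := by positivity

private lemma ml_aux_eq {α z : ℝ} (c : ℝ) (k : ℕ) :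
    ∀ t ∈ Ioi (0:ℝ), Real.exp (-z * t) * ((c * t ^ α) ^ k / Real.Gamma (α * k + 1)) =
      (c ^ k / Real.Gamma (α * k + 1)) * (t ^ (α * k + 1 - 1) * Real.exp (-(z * t))) := by
  intro t ht
  have hpow : (t ^ α) ^ k = t ^ (α * k) := by
    rw [← Real.rpow_natCast (t ^ α) k, ← Real.rpow_mul (le_of_lt ht)]
  simp only [mul_pow, hpow, neg_mul z t]
  ring_nf

private lemma ml_aux_integrable {α z : ℝ} (hα : 0 < α) (hz0 : 0 < z) (c : ℝ) (k : ℕ) :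
    IntegrableOn
      (fun t : ℝ => Real.exp (-z * t) * ((c * t ^ α) ^ k / Real.Gamma (α * k + 1)))
      (Ioi 0) := by
  have hbase : IntegrableOn
      (fun t : ℝ => t ^ (α * k + 1 - 1) * Real.exp (-(z * t))) (Ioi 0) := by
    have := integrableOn_rpow_mul_exp_neg_mul_rpow (s := α * k + 1 - 1) (p := 1) (b := z)
      (by have := ml_aux_pos α hα k; linarith) one_pos hz0
    simpa [Real.rpow_one] using this
  exact IntegrableOn.congr_fun (hbase.const_mul _)
    (fun t ht => (ml_aux_eq c k t ht).symm) measurableSet_Ioi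

private lemma ml_aux_integral {α z : ℝ} (hα : 0 < α) (hz0 : 0 < z) (c : ℝ) (k : ℕ) :
    ∫ t in Ioi (0:ℝ), Real.exp (-z * t) * ((c * t ^ α) ^ k / Real.Gamma (α * k + 1)) =
      (1 / z) * ((c * (1 / z) ^ α) ^ k) := by
  have hak := ml_aux_pos α hα k
  have hΓ : (0:ℝ) < Real.Gamma (α * k + 1) := Real.Gamma_pos_of_pos hak
  rw [setIntegral_congr_fun measurableSet_Ioi (ml_aux_eq c k), integral_const_mul,
    integral_rpow_mul_exp_neg_mul_Ioi hak hz0]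
  have hpow : (1 / z : ℝ) ^ (α * k + 1) = ((1 / z) ^ α) ^ k * (1 / z) := by
    rw [Real.rpow_add (by positivity), Real.rpow_one, ← Real.rpow_natCast ((1/z) ^ α) k,
      ← Real.rpow_mul (by positivity)]
  rw [hpow]
  field_simp [hΓ.ne', mul_pow]
  ring

/-- For `α > 0` and `λ > 0`, the Laplace transform of `t ↦ E_{α,1}(−λ t^α)` equals
`z^(α−1)/(λ + z^α)` for all real `z > λ^(1/α)`. -/
theorem laplace_mittagLeffler (α lam : ℝ) (hα : 0 < α) (hlam : 0 < lam) :
    ∀ z : ℝ, lam ^ (1 / α) < z →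
      ∫ t in Set.Ioi (0:ℝ), Real.exp (-z * t) * mittagLeffler α 1 (-lam * t ^ α) =
        z ^ (α - 1) / (lam + z ^ α) := by
  intro z hz
  have hz0 : 0 < z := lt_trans (Real.rpow_pos_of_pos hlam _) hz
  have hlz : lam < z ^ α := by
    have h1 : (lam ^ (1 / α)) ^ α < z ^ α :=
      Real.rpow_lt_rpow (by positivity) hz hα
    rwa [← Real.rpow_mul hlam.le, one_div_mul_cancel hα.ne', Real.rpow_one] at h1
  have hza : 0 < z ^ α := Real.rpow_pos_of_pos hz0 α
  set F : ℕ → ℝ → ℝ := fun k t =>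
    Real.exp (-z * t) * ((-lam * t ^ α) ^ k / Real.Gamma (α * k + 1)) with hF
  -- ratio
  set w : ℝ := (1 / z) ^ α with hw
  have hwval : w = (z ^ α)⁻¹ := by
    rw [hw, one_div, Real.inv_rpow hz0.le]
  have hw0 : 0 < w := by rw [hwval]; positivity
  have hratio : lam * w < 1 := by
    rw [hwval]
    rw [mul_inv_lt_iff₀ hza, one_mul]
    exact hlz
  -- integrability and norm-sum
  have hInt : ∀ k : ℕ, Integrable (F k) (volume.restrict (Ioi 0)) := fun k =>
    ml_aux_integrable hα hz0 (-lam) k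
  have hnormval : ∀ k : ℕ, ∫ t in Ioi (0:ℝ), ‖F k t‖ = (1 / z) * ((lam * w) ^ k) := by
    intro k
    have heq : ∀ t ∈ Ioi (0:ℝ), ‖F k t‖ =
        Real.exp (-z * t) * ((lam * t ^ α) ^ k / Real.Gamma (α * k + 1)) := by
      intro t ht
      have hΓ : (0:ℝ) < Real.Gamma (α * k + 1) := Real.Gamma_pos_of_pos (ml_aux_pos α hα k)
      have htα : (0:ℝ) ≤ t ^ α := Real.rpow_nonneg (le_of_lt ht) α
      rw [hF]
      simp only [Real.norm_eq_abs, abs_mul, abs_of_nonneg (Real.exp_pos _).le, abs_div,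
        abs_pow, abs_mul, abs_neg, abs_of_pos hlam, abs_of_nonneg htα, abs_of_pos hΓ]
    rw [setIntegral_congr_fun measurableSet_Ioi heq, ml_aux_integral hα hz0 lam k]
  have hsumnorm : Summable fun k : ℕ => ∫ t in Ioi (0:ℝ), ‖F k t‖ := by
    simp_rw [hnormval]
    exact (summable_geometric_of_lt_one (by positivity) hratio).mul_left _
  -- swap sum and integral
  have hswap := integral_tsum_of_summable_integral_norm hInt hsumnorm
  have hpt : ∀ t : ℝ, ∑' k, F k t = Real.exp (-z * t) * mittagLeffler α 1 (-lam * t ^ α) := by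
    intro t
    rw [mittagLeffler, tsum_mul_left]
  calc ∫ t in Ioi (0:ℝ), Real.exp (-z * t) * mittagLeffler α 1 (-lam * t ^ α)
      = ∫ t in Ioi (0:ℝ), ∑' k, F k t := by simp_rw [hpt]
    _ = ∑' k, ∫ t in Ioi (0:ℝ), F k t := hswap.symm
    _ = ∑' k : ℕ, (1 / z) * ((-lam * w) ^ k) := by
        refine tsum_congr fun k => ml_aux_integral hα hz0 (-lam) k
    _ = (1 / z) * (1 - (-lam * w))⁻¹ := by
        rw [tsum_mul_left, tsum_geometric_of_abs_lt_one]
        rw [abs_mul, abs_neg, abs_of_pos hlam, abs_of_pos hw0]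
        exact hratio
    _ = z ^ (α - 1) / (lam + z ^ α) := by
        rw [hwval, neg_mul, sub_neg_eq_add]
        have hzam : z ^ (α - 1) = z ^ α / z := by
          rw [Real.rpow_sub hz0, Real.rpow_one]
        have h1 : (1:ℝ) + lam * (z ^ α)⁻¹ = (lam + z ^ α) / z ^ α := by
          field_simp
          ring
        rw [h1, inv_div, hzam]
        ring
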